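/- Let s ≥ 2 and t coprime to s. For any partition λ and w ∈ W_s acting at level t, the s-weight of wλ equals the s-weight of λ, and the s-core of wλ equals w applied to the s-core of λ. -/

import Mathlib

open Classical

/-- A partition: an infinite weakly decreasing sequence of non-negative integers
with finite sum.  Here `f n` denotes the part `λ_{n+1}`. -/
structure SeqPartition where
  f : ℕ → ℕ
  antitone : ∀ ⦃m n : ℕ⦄, m ≤ n → f n ≤ f m
  eventually_zero : ∃ N, ∀ n, N ≤ n → f n = 0

instance : Inhabited SeqPartition :=
  ⟨⟨fun _ => 0, fun _ _ _ => le_rfl, ⟨0, fun _ _ => rfl⟩⟩⟩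

namespace SeqPartition

/-- The beta-set `β_r(λ) = {λ_i - i + r : i ≥ 1}`. -/
def beta (r : ℤ) (l : SeqPartition) : Set ℤ :=
  {x | ∃ n : ℕ, x = (l.f n : ℤ) - (n + 1) + r}

/-- The size `|λ|` of a partition. -/
noncomputable def size (l : SeqPartition) : ℕ := ∑ᶠ n, l.f n

/-- The partition whose beta-set (for some shift `r`) is `B`, if it exists. -/
noncomputable def ofBeta (B : Set ℤ) : SeqPartition :=
  if h : ∃ l : SeqPartition, ∃ r : ℤ, beta r l = B then h.choose else default

/-- The beta-set of the `s`-core: beads pushed up their runners as far as possible.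
A position `x` is occupied iff the number of beads of `B` weakly above it on its runner
exceeds the number of gaps strictly below it on its runner. -/
def coreBeta (s : ℕ) (B : Set ℤ) : Set ℤ :=
  {x | ({y : ℤ | y ∉ B ∧ y ≡ x [ZMOD (s : ℤ)] ∧ y < x}).ncard
      < ({b : ℤ | b ∈ B ∧ b ≡ x [ZMOD (s : ℤ)] ∧ x ≤ b}).ncard}

/-- The `s`-core of a partition. -/
noncomputable def core (s : ℕ) (l : SeqPartition) : SeqPartition :=
  ofBeta (coreBeta s (beta 0 l))

/-- `λ` is an `s`-core. -/
def IsCore (s : ℕ) (l : SeqPartition) : Prop := core s l = l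

/-- The `s`-weight of `λ`. -/
noncomputable def wt (s : ℕ) (l : SeqPartition) : ℕ := (size l - size (core s l)) / s

/-- The component of the `s`-quotient of `λ` indexed by `j : ZMod s`. -/
noncomputable def quot (s : ℕ) (l : SeqPartition) (j : ZMod s) : SeqPartition :=
  ofBeta {z : ℤ | ((j.val : ℤ) + (s : ℤ) * z) ∈ beta 0 l}

/-- The `s`-set entry `Γ_j(λ)`: the smallest integer in the class `j` mod `s`
not lying in the beta-set of the `s`-core of `λ`. -/
noncomputable def sSet (s : ℕ) (l : SeqPartition) (j : ZMod s) : ℤ :=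
  sInf {x : ℤ | (x : ZMod s) = j ∧ x ∉ beta 0 (core s l)}

/-- `λ` is an `[s:t]`-core. -/
def IsGenCore (s t : ℕ) (l : SeqPartition) : Prop :=
  wt s (core t l) = wt s l

/-- The level `t` action of the generator `w_i` of the affine symmetric group `W_s` on `ℤ`. -/
def genActZ (s t : ℕ) (i : ZMod s) (n : ℤ) : ℤ :=
  if (n : ZMod s) = (i - 1) * (t : ZMod s) - ((((s : ℤ) - 1) * ((t : ℤ) - 1) / 2 : ℤ) : ZMod s)
    then n + t
  else if (n : ZMod s) = i * (t : ZMod s) - ((((s : ℤ) - 1) * ((t : ℤ) - 1) / 2 : ℤ) : ZMod s)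
    then n - t
  else n

/-- The level `t` action of the generator `w_i` of `W_s` on partitions, via beta-sets. -/
noncomputable def genAct (s t : ℕ) (i : ZMod s) (l : SeqPartition) : SeqPartition :=
  ofBeta (genActZ s t i '' beta 0 l)

/-- The action of a word in the generators of `W_s`, at level `t`, on partitions. -/
noncomputable def wordAct (s t : ℕ) (w : List (ZMod s)) (l : SeqPartition) : SeqPartition :=
  w.foldr (genAct s t) l

/-- `λ` and `μ` lie in the same orbit for the level `t` action of `W_s`. -/
def SameOrbit (s t : ℕ) (l m : SeqPartition) : Prop :=
  ∃ w : List (ZMod s), wordAct s t w l = m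

/-- `λ` and `μ` lie in the same orbit for the commuting actions of `W_s` (level `t`)
and `W_t` (level `s`). -/
def SameOrbit2 (s t : ℕ) (l m : SeqPartition) : Prop :=
  ∃ a : List (ZMod s), ∃ b : List (ZMod t), wordAct s t a (wordAct t s b l) = m

/-- The `t`-weighted `s`-quotient of `λ`: the multiset of pairs
`(Γ_i(λ) + tℤ, λ^(i))` over `i ∈ ℤ/sℤ`. -/
noncomputable def twq (s t : ℕ) (l : SeqPartition) : Multiset (ZMod t × SeqPartition) :=
  ((List.range s).map (fun i =>
    (((sSet s l (i : ZMod s) : ℤ) : ZMod t), quot s l (i : ZMod s))) : Multiset _)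

/-- The largest `(s,t)`-core `κ_{s,t}`: the partition whose beta-set is the set of
integers not expressible as a non-negative integer combination of `s` and `t`. -/
noncomputable def kappa (s t : ℕ) : SeqPartition :=
  ofBeta {x : ℤ | ¬ ∃ a b : ℕ, x = (a : ℤ) * s + (b : ℤ) * t}

end SeqPartition



namespace PfAux
open SeqPartition Set

noncomputable def el (l : SeqPartition) (n : ℕ) : ℤ := (l.f n : ℤ) - (n + 1)

lemma el_strictAnti (l : SeqPartition) : StrictAnti (el l) := by
  intro m n h
  have h1 : l.f n ≤ l.f m := l.antitone h.le
  have h2 : (l.f n : ℤ) ≤ l.f m := by exact_mod_cast h1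
  simp only [el]; push_cast; omega

lemma range_el (l : SeqPartition) : Set.range (el l) = beta 0 l := by
  ext x; simp [el, beta, eq_comm]

lemma el_thr (l : SeqPartition) : ∃ N : ℕ, ∀ n, N ≤ n → el l n = -((n : ℤ) + 1) := by
  obtain ⟨N, hN⟩ := l.eventually_zero
  exact ⟨N, fun n hn => by simp [el, hN n hn]⟩

lemma strictAnti_ext {g g' : ℕ → ℤ} (hg : StrictAnti g) (hg' : StrictAnti g')
    (h : Set.range g = Set.range g') : g = g' := by
  have key : ∀ (a b : ℕ → ℤ), StrictAnti a → StrictAnti b → Set.range a = Set.range b →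
      ∀ n, (∀ k, k < n → a k = b k) → a n ≤ b n := by
    intro a b ha hb hr n hk
    have hmem : a n ∈ Set.range b := by rw [← hr]; exact ⟨n, rfl⟩
    obtain ⟨m, hm⟩ := hmem
    rcases lt_or_ge m n with hmn | hmn
    · exfalso
      have h1 : a m = b m := hk m hmn
      have h2 : a n = a m := by rw [← hm, h1]
      have := ha.injective h2
      omega
    · rw [← hm]; exact hb.antitone hmn
  funext n
  induction n using Nat.strong_induction_on with
  | _ n ih =>
    have h1 := key _ _ hg hg' h n ih
    have h2 := key _ _ hg' hg h.symm n (fun k hk => (ih k hk).symm)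
    omega

lemma beta_eq_range (r : ℤ) (l : SeqPartition) :
    beta r l = Set.range (fun n => el l n + r) := by
  ext x
  constructor
  · rintro ⟨n, hn⟩; exact ⟨n, by simp only [el]; omega⟩
  · rintro ⟨n, hn⟩; exact ⟨n, by simp only [el] at hn; omega⟩

lemma beta_inj {r1 r2 : ℤ} {l1 l2 : SeqPartition} (h : beta r1 l1 = beta r2 l2) : l1 = l2 := by
  have hg : (fun n => el l1 n + r1) = (fun n => el l2 n + r2) := by
    apply strictAnti_ext
    · intro m n hmn; simp only; have := el_strictAnti l1 hmn; omega
    · intro m n hmn; simp only; have := el_strictAnti l2 hmn; omega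
    · rw [← beta_eq_range, ← beta_eq_range, h]
  obtain ⟨N1, hN1⟩ := el_thr l1
  obtain ⟨N2, hN2⟩ := el_thr l2
  have hr : r1 = r2 := by
    have := congrFun hg (max N1 N2)
    rw [hN1 _ (le_max_left _ _), hN2 _ (le_max_right _ _)] at this
    omega
  have hf : ∀ n, l1.f n = l2.f n := by
    intro n
    have := congrFun hg n
    simp only [el, hr] at this
    omega
  cases l1; cases l2
  simp only [SeqPartition.mk.injEq]
  exact funext hf

lemma ofBeta_eq {B : Set ℤ} {l : SeqPartition} (h : beta 0 l = B) : ofBeta B = l := by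
  have hex : ∃ l' : SeqPartition, ∃ r : ℤ, beta r l' = B := ⟨l, 0, h⟩
  rw [ofBeta, dif_pos hex]
  obtain ⟨r, hr⟩ := hex.choose_spec
  exact beta_inj (by rw [hr, h])

end PfAux

namespace PfAux
open SeqPartition Set

noncomputable def zsum (S : Set ℤ) : ℤ := ∑ᶠ y ∈ S, y

lemma zsum_coe (F : Finset ℤ) : zsum ↑F = ∑ x ∈ F, x :=
  finsum_mem_coe_finset _ F

lemma zsum_finite (S : Set ℤ) (h : S.Finite) : zsum S = ∑ x ∈ h.toFinset, x := by
  rw [← zsum_coe, h.coe_toFinset]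

lemma beta0_inter_Ici (l : SeqPartition) {N : ℕ} (hN : ∀ n, N ≤ n → el l n = -((n:ℤ)+1))
    {M : ℕ} (hM : N + 1 ≤ M) :
    beta 0 l ∩ Ici (-(M:ℤ)) = el l '' (Set.Iio M) := by
  ext x
  constructor
  · rintro ⟨hx, hge⟩
    rw [← range_el] at hx
    obtain ⟨n, hn⟩ := hx
    refine ⟨n, ?_, hn⟩
    by_contra hcon
    simp only [Set.mem_Iio, not_lt] at hcon
    have h1 : el l n ≤ el l M := (el_strictAnti l).antitone hcon
    rw [hN M (by omega)] at h1
    simp only [mem_Ici] at hge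
    omega
  · rintro ⟨n, hn, rfl⟩
    simp only [mem_Iio] at hn
    constructor
    · rw [← range_el]; exact ⟨n, rfl⟩
    · simp only [mem_Ici]
      have h1 : el l (M-1) ≤ el l n := (el_strictAnti l).antitone (by omega)
      rw [hN (M-1) (by omega)] at h1
      omega

lemma ncard_image_of_inj {α β : Type*} (S : Set α) (f : α → β) (hf : Set.InjOn f S) :
    (f '' S).ncard = S.ncard := Set.ncard_image_of_injOn hf

lemma beta0_count (l : SeqPartition) {N : ℕ} (hN : ∀ n, N ≤ n → el l n = -((n:ℤ)+1))
    {M : ℕ} (hM : N + 1 ≤ M) :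
    (beta 0 l ∩ Ici (-(M:ℤ))).ncard = M := by
  rw [beta0_inter_Ici l hN hM]
  rw [Set.ncard_image_of_injOn ((el_strictAnti l).injective.injOn)]
  have : (Set.Iio M) = ↑(Finset.range M) := by ext k; simp
  rw [this, Set.ncard_coe_finset, Finset.card_range]

lemma beta0_zsum (l : SeqPartition) {N : ℕ} (hN : ∀ n, N ≤ n → el l n = -((n:ℤ)+1))
    {M : ℕ} (hM : N + 1 ≤ M) :
    zsum (beta 0 l ∩ Ici (-(M:ℤ))) = ∑ n ∈ Finset.range M, el l n := by
  rw [beta0_inter_Ici l hN hM]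
  have h1 : (Set.Iio M) = ↑(Finset.range M) := by ext k; simp
  rw [h1, ← Finset.coe_image, zsum_coe]
  rw [Finset.sum_image (fun a _ b _ h => (el_strictAnti l).injective h)]

lemma size_formula (l : SeqPartition) {N : ℕ} (hNf : ∀ n, N ≤ n → l.f n = 0)
    {M : ℕ} (hM : N + 1 ≤ M) :
    (size l : ℤ) = zsum (beta 0 l ∩ Ici (-(M:ℤ))) + ∑ n ∈ Finset.range M, ((n:ℤ)+1) := by
  have hN : ∀ n, N ≤ n → el l n = -((n:ℤ)+1) := fun n hn => by simp [el, hNf n hn]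
  rw [beta0_zsum l hN hM]
  have hsize : size l = ∑ n ∈ Finset.range M, l.f n := by
    rw [size]
    apply finsum_eq_sum_of_support_subset
    intro n hn
    simp only [Function.mem_support] at hn
    simp only [Finset.coe_range, mem_Iio]
    by_contra hcon
    exact hn (hNf n (by omega))
  rw [hsize]
  push_cast
  rw [← Finset.sum_add_distrib]
  congr 1
  ext n
  simp [el]

/-- decreasing enumeration of a set -/
noncomputable def enum (B : Set ℤ) : ℕ → ℤ
  | 0 => sSup B
  | n+1 => sSup (B ∩ Iio (enum B n))

section Enum

variable {B : Set ℤ} {N M : ℤ} (hN : ∀ x : ℤ, x ≤ N → x ∈ B) (hM : ∀ x ∈ B, x ≤ M)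

include hN hM

lemma enum_mem : ∀ n, enum B n ∈ B := by
  intro n
  induction n with
  | zero => exact Int.csSup_mem ⟨N, hN N le_rfl⟩ ⟨M, fun x hx => hM x hx⟩
  | succ n ih =>
    have h1 : (B ∩ Iio (enum B n)).Nonempty :=
      ⟨min N (enum B n - 1), hN _ (min_le_left _ _), by simp only [Set.mem_Iio]; omega⟩
    have h2 : BddAbove (B ∩ Iio (enum B n)) := ⟨M, fun x hx => hM x hx.1⟩
    exact (Int.csSup_mem h1 h2).1

lemma enum_succ_lt (n : ℕ) : enum B (n+1) < enum B n := by
  have h1 : (B ∩ Iio (enum B n)).Nonempty :=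
    ⟨min N (enum B n - 1), hN _ (min_le_left _ _), by simp only [Set.mem_Iio]; omega⟩
  have h2 : BddAbove (B ∩ Iio (enum B n)) := ⟨M, fun x hx => hM x hx.1⟩
  exact (Int.csSup_mem h1 h2).2

lemma enum_strictAnti : StrictAnti (enum B) :=
  strictAnti_nat_of_succ_lt (enum_succ_lt hN hM)

lemma le_enum_zero {x : ℤ} (hx : x ∈ B) : x ≤ enum B 0 :=
  le_csSup ⟨M, fun y hy => hM y hy⟩ hx

lemma le_enum_succ {x : ℤ} (n : ℕ) (hx : x ∈ B) (hlt : x < enum B n) : x ≤ enum B (n+1) :=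
  le_csSup ⟨M, fun y hy => hM y hy.1⟩ ⟨hx, hlt⟩

lemma enum_le_linear (n : ℕ) : enum B n ≤ enum B 0 - n := by
  induction n with
  | zero => simp
  | succ n ih => have := enum_succ_lt hN hM n; push_cast; omega

lemma range_enum : Set.range (enum B) = B := by
  apply Set.Subset.antisymm
  · rintro x ⟨n, rfl⟩; exact enum_mem hN hM n
  · intro x hx
    have hex : ∃ n : ℕ, enum B n ≤ x := by
      refine ⟨(enum B 0 - x).toNat, ?_⟩
      have := enum_le_linear hN hM (enum B 0 - x).toNat
      omega
    set n := Nat.find hex with hn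
    have h1 : enum B n ≤ x := Nat.find_spec hex
    rcases eq_or_lt_of_le h1 with heq | hlt
    · exact ⟨n, heq⟩
    · exfalso
      have hn0 : n ≠ 0 := by
        intro h0
        rw [h0] at hlt
        exact absurd (le_enum_zero hN hM hx) (by omega)
      obtain ⟨k, hk⟩ : ∃ k, n = k + 1 := ⟨n - 1, by omega⟩
      have h2 : ¬ enum B k ≤ x := Nat.find_min hex (by omega)
      have h3 := le_enum_succ hN hM (x := x) k hx (by omega)
      rw [← hk] at h3
      omega

lemma enum_inter_Ici (n : ℕ) : B ∩ Ici (enum B n) = enum B '' (Set.Iic n) := by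
  ext x
  constructor
  · rintro ⟨hx, hge⟩
    rw [← range_enum hN hM] at hx
    obtain ⟨m, rfl⟩ := hx
    refine ⟨m, ?_, rfl⟩
    simp only [mem_Iic]
    by_contra hcon
    have := enum_strictAnti hN hM (show n < m by omega)
    simp only [mem_Ici] at hge
    omega
  · rintro ⟨m, hm, rfl⟩
    simp only [mem_Iic] at hm
    exact ⟨enum_mem hN hM m, (enum_strictAnti hN hM).antitone hm⟩

lemma exists_beta0 (hcnt : ∀ x : ℤ, x ≤ N → ((B ∩ Ici x).ncard : ℤ) = -x) :
    ∃ l : SeqPartition, beta 0 l = B := by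
  -- eventually enum B n = -(n+1)
  obtain ⟨n₀, hn₀⟩ : ∃ n₀ : ℕ, enum B n₀ ≤ N := by
    refine ⟨(enum B 0 - N).toNat, ?_⟩
    have := enum_le_linear hN hM (enum B 0 - N).toNat
    omega
  have hlow : ∀ n, n₀ ≤ n → enum B n = -((n:ℤ)+1) := by
    intro n hn
    have h1 : enum B n ≤ N := le_trans ((enum_strictAnti hN hM).antitone hn) hn₀
    have h2 := hcnt (enum B n) h1
    rw [enum_inter_Ici hN hM n] at h2
    rw [Set.ncard_image_of_injOn ((enum_strictAnti hN hM).injective.injOn)] at h2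
    have h3 : (Set.Iic n) = ↑(Finset.Iic n) := by ext k; simp
    rw [h3, Set.ncard_coe_finset, Nat.card_Iic] at h2
    push_cast at h2
    omega
  -- build partition
  set g : ℕ → ℤ := fun n => enum B n + n + 1 with hg
  have hganti : ∀ n, g (n+1) ≤ g n := by
    intro n
    have := enum_succ_lt hN hM n
    simp only [hg]; push_cast; omega
  have hganti' : Antitone g := antitone_nat_of_succ_le hganti
  have hg0 : ∀ n, n₀ ≤ n → g n = 0 := fun n hn => by simp [hg, hlow n hn]
  have hgnn : ∀ n, 0 ≤ g n := by
    intro n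
    rcases le_total n₀ n with h | h
    · rw [hg0 n h]
    · rw [← hg0 n₀ le_rfl]; exact hganti' h
  have hA : ∀ ⦃m n : ℕ⦄, m ≤ n → (g n).toNat ≤ (g m).toNat := by
    intro m n hmn
    have h1 := hganti' hmn
    have := hgnn n
    omega
  have hE : ∃ N', ∀ n, N' ≤ n → (g n).toNat = 0 :=
    ⟨n₀, fun n hn => by rw [hg0 n hn]; rfl⟩
  refine ⟨⟨fun n => (g n).toNat, hA, hE⟩, ?_⟩
  rw [beta_eq_range]
  have heq : (fun n => el ⟨fun n => (g n).toNat, hA, hE⟩ n + 0) = enum B := by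
    funext n
    show ((g n).toNat : ℤ) - ((n : ℤ) + 1) + 0 = enum B n
    have h1 := hgnn n
    have h2 : g n = enum B n + n + 1 := rfl
    omega
  rw [heq, range_enum hN hM]

end Enum

end PfAux


namespace PfAux
open SeqPartition Set

def beads (s : ℕ) (B : Set ℤ) (x : ℤ) : Set ℤ :=
  {b : ℤ | b ∈ B ∧ b ≡ x [ZMOD (s : ℤ)] ∧ x ≤ b}

def gaps (s : ℕ) (B : Set ℤ) (x : ℤ) : Set ℤ :=
  {y : ℤ | y ∉ B ∧ y ≡ x [ZMOD (s : ℤ)] ∧ y < x}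

noncomputable def nu (s : ℕ) (B : Set ℤ) (x : ℤ) : ℤ :=
  ((beads s B x).ncard : ℤ) - ((gaps s B x).ncard : ℤ)

lemma coreBeta_eq (s : ℕ) (B : Set ℤ) :
    coreBeta s B = {x | (gaps s B x).ncard < (beads s B x).ncard} := rfl

lemma runner_sep {s : ℕ} (hs : 0 < s) {a b : ℤ} (h : a ≡ b [ZMOD (s:ℤ)]) (h1 : b ≤ a)
    (h2 : a < b + s) : a = b := by
  obtain ⟨k, hk⟩ := h.dvd
  have hs' : (0:ℤ) < s := by exact_mod_cast hs
  rcases lt_trichotomy k 0 with h3 | h3 | h3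
  · nlinarith
  · rw [h3, mul_zero] at hk; omega
  · nlinarith

lemma modeq_add_right (s : ℕ) (x : ℤ) : (x + s) ≡ x [ZMOD (s:ℤ)] :=
  Int.modEq_iff_dvd.mpr ⟨-1, by ring⟩

section Runner

variable {s : ℕ} {B : Set ℤ} {N M : ℤ}

lemma beads_finite (hM : ∀ x ∈ B, x ≤ M) (x : ℤ) : (beads s B x).Finite :=
  (Set.finite_Icc x M).subset (fun y hy => ⟨hy.2.2, hM y hy.1⟩)

lemma gaps_finite (hN : ∀ x : ℤ, x ≤ N → x ∈ B) (x : ℤ) : (gaps s B x).Finite :=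
  (Set.finite_Ioo N x).subset (fun y hy => ⟨not_le.mp (mt (hN y) hy.1), hy.2.2⟩)

lemma beads_step_mem (hs : 0 < s) {x : ℤ} (hx : x ∈ B) :
    beads s B x = insert x (beads s B (x + s)) := by
  have hs0 : (0:ℤ) < (s:ℤ) := by exact_mod_cast hs
  ext y
  simp only [beads, Set.mem_setOf_eq, Set.mem_insert_iff]
  constructor
  · rintro ⟨hyB, hmod, hle⟩
    rcases lt_or_ge y (x + s) with h | h
    · left; exact runner_sep hs hmod hle h
    · right; exact ⟨hyB, hmod.trans (modeq_add_right s x).symm, h⟩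
  · rintro (rfl | ⟨hyB, hmod, hle⟩)
    · exact ⟨hx, Int.ModEq.refl _, le_refl _⟩
    · exact ⟨hyB, hmod.trans (modeq_add_right s x), by omega⟩

lemma beads_step_not_mem (hs : 0 < s) {x : ℤ} (hx : x ∉ B) :
    beads s B x = beads s B (x + s) := by
  have hs0 : (0:ℤ) < (s:ℤ) := by exact_mod_cast hs
  ext y
  simp only [beads, Set.mem_setOf_eq]
  constructor
  · rintro ⟨hyB, hmod, hle⟩
    rcases lt_or_ge y (x + s) with h | h
    · exact absurd (runner_sep hs hmod hle h ▸ hyB) hx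
    · exact ⟨hyB, hmod.trans (modeq_add_right s x).symm, h⟩
  · rintro ⟨hyB, hmod, hle⟩
    exact ⟨hyB, hmod.trans (modeq_add_right s x), by omega⟩

lemma not_mem_beads_self_succ (hs : 0 < s) (x : ℤ) : x ∉ beads s B (x + s) := by
  have hs0 : (0:ℤ) < (s:ℤ) := by exact_mod_cast hs
  rintro ⟨-, -, h⟩; omega

lemma gaps_step_not_mem (hs : 0 < s) {x : ℤ} (hx : x ∉ B) :
    gaps s B (x + s) = insert x (gaps s B x) := by
  have hs0 : (0:ℤ) < (s:ℤ) := by exact_mod_cast hs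
  ext y
  simp only [gaps, Set.mem_setOf_eq, Set.mem_insert_iff]
  constructor
  · rintro ⟨hyB, hmod, hlt⟩
    have hmod' : y ≡ x [ZMOD (s:ℤ)] := hmod.trans (modeq_add_right s x)
    rcases lt_or_ge y x with h | h
    · right; exact ⟨hyB, hmod', h⟩
    · left; exact runner_sep hs hmod' h hlt
  · rintro (heq | ⟨hyB, hmod, hlt⟩)
    · subst heq; exact ⟨hx, (modeq_add_right _ _).symm, by omega⟩
    · exact ⟨hyB, hmod.trans (modeq_add_right s x).symm, by omega⟩

lemma gaps_step_mem (hs : 0 < s) {x : ℤ} (hx : x ∈ B) :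
    gaps s B (x + s) = gaps s B x := by
  have hs0 : (0:ℤ) < (s:ℤ) := by exact_mod_cast hs
  ext y
  simp only [gaps, Set.mem_setOf_eq]
  constructor
  · rintro ⟨hyB, hmod, hlt⟩
    have hmod' : y ≡ x [ZMOD (s:ℤ)] := hmod.trans (modeq_add_right s x)
    rcases lt_or_ge y x with h | h
    · exact ⟨hyB, hmod', h⟩
    · exact absurd (runner_sep hs hmod' h hlt ▸ hx) hyB
  · rintro ⟨hyB, hmod, hlt⟩
    exact ⟨hyB, hmod.trans (modeq_add_right s x).symm, by omega⟩

lemma not_mem_gaps_self (x : ℤ) : x ∉ gaps s B x := by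
  rintro ⟨-, -, h⟩; omega

lemma nu_step (hs : 0 < s) (hN : ∀ x : ℤ, x ≤ N → x ∈ B) (hM : ∀ x ∈ B, x ≤ M) (x : ℤ) :
    nu s B (x + s) = nu s B x - 1 := by
  by_cases hx : x ∈ B
  · have h1 : (beads s B x).ncard = (beads s B (x+s)).ncard + 1 := by
      rw [beads_step_mem hs hx]
      exact Set.ncard_insert_of_notMem (not_mem_beads_self_succ hs x) (beads_finite hM _)
    have h2 : gaps s B (x + s) = gaps s B x := gaps_step_mem hs hx
    simp only [nu, h2, h1]; push_cast; ring
  · have h1 : beads s B x = beads s B (x + s) := beads_step_not_mem hs hx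
    have h2 : (gaps s B (x+s)).ncard = (gaps s B x).ncard + 1 := by
      rw [gaps_step_not_mem hs hx]
      exact Set.ncard_insert_of_notMem (not_mem_gaps_self x) (gaps_finite hN _)
    simp only [nu, h1, h2]; push_cast; ring

lemma nu_add (hs : 0 < s) (hN : ∀ x : ℤ, x ≤ N → x ∈ B) (hM : ∀ x ∈ B, x ≤ M) (x : ℤ)
    (k : ℕ) : nu s B (x + k * s) = nu s B x - k := by
  induction k with
  | zero => simp
  | succ k ih =>
    have harg : x + ((k:ℤ)+1) * s = (x + k * s) + s := by ring
    have := nu_step hs hN hM (x + k * s)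
    push_cast
    rw [harg, this, ih]
    push_cast; ring

lemma nu_runner_le (hs : 0 < s) (hN : ∀ x : ℤ, x ≤ N → x ∈ B) (hM : ∀ x ∈ B, x ≤ M)
    {a b : ℤ} (h : a ≡ b [ZMOD (s:ℤ)]) (hab : a ≤ b) :
    (s:ℤ) * nu s B a + a = (s:ℤ) * nu s B b + b := by
  have hs0 : (0:ℤ) < (s:ℤ) := by exact_mod_cast hs
  obtain ⟨k, hk⟩ := h.dvd
  have hk0 : 0 ≤ k := by nlinarith
  have h4 : (k.toNat : ℤ) = k := Int.toNat_of_nonneg hk0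
  have hb : b = a + (k.toNat : ℤ) * s := by
    rw [h4]; linear_combination hk
  rw [hb, nu_add hs hN hM a k.toNat]
  ring

lemma nu_runner (hs : 0 < s) (hN : ∀ x : ℤ, x ≤ N → x ∈ B) (hM : ∀ x ∈ B, x ≤ M)
    {a b : ℤ} (h : a ≡ b [ZMOD (s:ℤ)]) :
    (s:ℤ) * nu s B a + a = (s:ℤ) * nu s B b + b := by
  rcases le_total a b with hab | hab
  · exact nu_runner_le hs hN hM h hab
  · exact (nu_runner_le hs hN hM h.symm hab).symm

lemma mem_coreBeta_iff {x : ℤ} : x ∈ coreBeta s B ↔ 1 ≤ nu s B x := by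
  rw [coreBeta_eq]
  simp only [Set.mem_setOf_eq, nu]
  omega

lemma gaps_low (hN : ∀ x : ℤ, x ≤ N → x ∈ B) {x : ℤ} (hx : x ≤ N) : gaps s B x = ∅ := by
  ext y
  simp only [gaps, Set.mem_setOf_eq, Set.mem_empty_iff_false, iff_false, not_and]
  intro hyB hmod hlt
  exact hyB (hN y (by omega))

lemma nu_low (hN : ∀ x : ℤ, x ≤ N → x ∈ B) {x : ℤ} (hx : x ≤ N) :
    nu s B x = ((beads s B x).ncard : ℤ) := by
  simp [nu, gaps_low hN hx]

lemma one_le_nu_low (hN : ∀ x : ℤ, x ≤ N → x ∈ B) (hM : ∀ x ∈ B, x ≤ M) {x : ℤ}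
    (hx : x ≤ N) : 1 ≤ nu s B x := by
  rw [nu_low hN hx]
  have : 0 < (beads s B x).ncard :=
    (Set.ncard_pos (beads_finite hM x)).mpr ⟨x, hN x hx, Int.ModEq.refl _, le_refl _⟩
  omega

lemma coreBeta_low (hN : ∀ x : ℤ, x ≤ N → x ∈ B) (hM : ∀ x ∈ B, x ≤ M) {x : ℤ}
    (hx : x ≤ N) : x ∈ coreBeta s B :=
  mem_coreBeta_iff.mpr (one_le_nu_low hN hM hx)

lemma coreBeta_bdd (hM : ∀ x ∈ B, x ≤ M) {x : ℤ} (hx : x ∈ coreBeta s B) : x ≤ M := by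
  rw [mem_coreBeta_iff] at hx
  simp only [nu] at hx
  have h1 : (beads s B x).ncard ≠ 0 := by omega
  obtain ⟨b, hb⟩ := Set.nonempty_of_ncard_ne_zero h1
  exact le_trans hb.2.2 (hM b hb.1)

lemma beads_coreBeta (hs : 0 < s) (hN : ∀ x : ℤ, x ≤ N → x ∈ B) (hM : ∀ x ∈ B, x ≤ M)
    (x : ℤ) :
    beads s (coreBeta s B) x = (fun k : ℕ => x + (k:ℤ) * s) '' {k : ℕ | (k:ℤ) < nu s B x} := by
  have hs0 : (0:ℤ) < (s:ℤ) := by exact_mod_cast hs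
  ext y
  simp only [beads, Set.mem_setOf_eq, Set.mem_image]
  constructor
  · rintro ⟨hyC, hmod, hle⟩
    have h1 : 1 ≤ nu s B y := mem_coreBeta_iff.mp hyC
    have h2 := nu_runner hs hN hM hmod
    obtain ⟨k, hk⟩ := hmod.dvd
    have hk0 : 0 ≤ -k := by nlinarith
    have h4 : ((-k).toNat : ℤ) = -k := Int.toNat_of_nonneg hk0
    refine ⟨(-k).toNat, ?_, ?_⟩
    · show (((-k).toNat : ℕ) : ℤ) < nu s B x
      have h6 : (s:ℤ) * -k = -((s:ℤ)*k) := by ring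
      have h3 : (s:ℤ) * nu s B y = (s:ℤ) * (nu s B x - ((-k).toNat : ℤ)) := by
        rw [mul_sub, h4]
        linarith [h2, hk, h6]
      have h5 : nu s B y = nu s B x - ((-k).toNat : ℤ) :=
        mul_left_cancel₀ (ne_of_gt hs0) h3
      omega
    · show x + ((-k).toNat : ℤ) * s = y
      rw [h4]; linear_combination hk
  · rintro ⟨k, hk, rfl⟩
    have hk' : (k : ℤ) < nu s B x := hk
    have hmod : x + (k:ℤ) * s ≡ x [ZMOD (s:ℤ)] := Int.modEq_iff_dvd.mpr ⟨-k, by ring⟩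
    have hpos : 0 ≤ (k:ℤ) * (s:ℤ) := by positivity
    refine ⟨?_, hmod, by omega⟩
    rw [mem_coreBeta_iff, nu_add hs hN hM x k]
    omega

lemma ncard_beads_coreBeta (hs : 0 < s) (hN : ∀ x : ℤ, x ≤ N → x ∈ B) (hM : ∀ x ∈ B, x ≤ M)
    (x : ℤ) : ((beads s (coreBeta s B) x).ncard : ℤ) = max (nu s B x) 0 := by
  have hs0 : (0:ℤ) < (s:ℤ) := by exact_mod_cast hs
  rw [beads_coreBeta hs hN hM x]
  have hinj : Function.Injective (fun k : ℕ => x + (k:ℤ) * s) := by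
    intro a b hab
    simp only at hab
    have : (a:ℤ) * s = (b:ℤ) * s := by omega
    have := mul_right_cancel₀ (by omega : (s:ℤ) ≠ 0) this
    exact_mod_cast this
  rw [Set.ncard_image_of_injective _ hinj]
  have hset : {k : ℕ | (k:ℤ) < nu s B x} = ↑(Finset.range (nu s B x).toNat) := by
    ext k
    simp only [Set.mem_setOf_eq, Finset.coe_range, Set.mem_Iio]
    omega
  rw [hset, Set.ncard_coe_finset, Finset.card_range]
  omega

lemma nu_coreBeta_low (hs : 0 < s) (hN : ∀ x : ℤ, x ≤ N → x ∈ B) (hM : ∀ x ∈ B, x ≤ M)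
    {x : ℤ} (hx : x ≤ N) : nu s (coreBeta s B) x = nu s B x := by
  have hCN : ∀ y : ℤ, y ≤ N → y ∈ coreBeta s B := fun y hy => coreBeta_low hN hM hy
  rw [nu_low hCN hx, ncard_beads_coreBeta hs hN hM x]
  have h1 := one_le_nu_low (s := s) hN hM hx
  exact max_eq_left (by omega)

end Runner

end PfAux


namespace PfAux
open SeqPartition Set

lemma ncard_eq_card {S : Set ℤ} (h : S.Finite) : S.ncard = h.toFinset.card := by
  rw [← Set.ncard_coe_finset, h.coe_toFinset]

section Decomp

variable {s : ℕ}

lemma inter_Ici_eq_biUnion (hs : 0 < s) (X : Set ℤ) (x₀ : ℤ) :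
    X ∩ Set.Ici x₀ = ⋃ i ∈ Finset.range s, beads s X (x₀ + i) := by
  have hs0 : (0:ℤ) < (s:ℤ) := by exact_mod_cast hs
  ext y
  simp only [Set.mem_inter_iff, Set.mem_Ici, Set.mem_iUnion, Finset.mem_range, exists_prop]
  constructor
  · rintro ⟨hy, hge⟩
    have hr0 : 0 ≤ (y - x₀) % s := Int.emod_nonneg _ (ne_of_gt hs0)
    have hrs : (y - x₀) % s < s := Int.emod_lt_of_pos _ hs0
    have hdef : (y - x₀) % s = (y - x₀) - s * ((y - x₀) / s) := by rw [Int.emod_def]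
    have hdivnn : 0 ≤ (y - x₀) / s := Int.ediv_nonneg (by omega) (by omega)
    have hsd : 0 ≤ (s:ℤ) * ((y - x₀) / s) := mul_nonneg hs0.le hdivnn
    have hcast : ((((y - x₀) % s).toNat : ℕ) : ℤ) = (y - x₀) % s := Int.toNat_of_nonneg hr0
    refine ⟨((y - x₀) % s).toNat, by omega, hy, ?_, ?_⟩
    · rw [hcast]
      apply Int.modEq_iff_dvd.mpr
      exact ⟨-((y - x₀) / s), by linear_combination hdef⟩
    · rw [hcast]; omega
  · rintro ⟨i, hi, hyX, hmod, hle⟩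
    have hnn : (0:ℤ) ≤ (i:ℕ) := Int.natCast_nonneg i
    exact ⟨hyX, by omega⟩

lemma decomp (hs : 0 < s) {X : Set ℤ} {M : ℤ} (hM : ∀ x ∈ X, x ≤ M) (x₀ : ℤ) :
    ((X ∩ Set.Ici x₀).ncard = ∑ i ∈ Finset.range s, (beads s X (x₀ + i)).ncard) ∧
    (zsum (X ∩ Set.Ici x₀) = ∑ i ∈ Finset.range s, zsum (beads s X (x₀ + i))) := by
  have hs0 : (0:ℤ) < (s:ℤ) := by exact_mod_cast hs
  have hXfin : (X ∩ Set.Ici x₀).Finite :=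
    (Set.finite_Icc x₀ M).subset (fun y hy => ⟨hy.2, hM y hy.1⟩)
  have hbfin : ∀ i : ℕ, (beads s X (x₀ + i)).Finite := fun i => beads_finite hM _
  have hFeq : hXfin.toFinset = (Finset.range s).biUnion (fun i => (hbfin i).toFinset) := by
    ext y
    simp only [Set.Finite.mem_toFinset, Finset.mem_biUnion, Finset.mem_range]
    rw [show (y ∈ X ∩ Set.Ici x₀) ↔ y ∈ ⋃ i ∈ Finset.range s, beads s X (x₀ + i) by
      rw [← inter_Ici_eq_biUnion hs X x₀]]
    simp only [Set.mem_iUnion, Finset.mem_range, exists_prop]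
  have hdisj : ∀ i ∈ Finset.range s, ∀ j ∈ Finset.range s, i ≠ j →
      Disjoint ((hbfin i).toFinset) ((hbfin j).toFinset) := by
    intro i hi j hj hij
    rw [Finset.disjoint_left]
    intro y hyi hyj
    simp only [Set.Finite.mem_toFinset] at hyi hyj
    have h1 : (x₀ + (i:ℤ)) ≡ (x₀ + (j:ℤ)) [ZMOD (s:ℤ)] := hyi.2.1.symm.trans hyj.2.1
    obtain ⟨k, hk⟩ := h1.dvd
    simp only [Finset.mem_range] at hi hj
    have hi' : (i:ℤ) < s := by exact_mod_cast hi
    have hj' : (j:ℤ) < s := by exact_mod_cast hj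
    have hij' : (i:ℤ) ≠ (j:ℤ) := fun h => hij (by exact_mod_cast h)
    rcases lt_trichotomy k 0 with h | h | h
    · nlinarith
    · rw [h, mul_zero] at hk; omega
    · nlinarith
  constructor
  · rw [ncard_eq_card hXfin, hFeq, Finset.card_biUnion hdisj]
    exact Finset.sum_congr rfl (fun i _ => (ncard_eq_card (hbfin i)).symm)
  · rw [zsum_finite _ hXfin, hFeq,
      Finset.sum_biUnion (fun i hi j hj hij => hdisj i (Finset.mem_coe.mp hi) j
        (Finset.mem_coe.mp hj) hij)]
    exact Finset.sum_congr rfl (fun i _ => (zsum_finite _ (hbfin i)).symm)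

end Decomp

section GA

variable {s t : ℕ} {i : ZMod s}

lemma modeq_cast {a b : ℤ} : a ≡ b [ZMOD (s:ℤ)] ↔ (a : ZMod s) = (b : ZMod s) :=
  (ZMod.intCast_eq_intCast_iff' a b s).symm

/-- the class that moves up by t -/
noncomputable def clA (s t : ℕ) (i : ZMod s) : ZMod s :=
  (i - 1) * (t : ZMod s) - ((((s : ℤ) - 1) * ((t : ℤ) - 1) / 2 : ℤ) : ZMod s)

/-- the class that moves down by t -/
noncomputable def clB (s t : ℕ) (i : ZMod s) : ZMod s :=
  i * (t : ZMod s) - ((((s : ℤ) - 1) * ((t : ℤ) - 1) / 2 : ℤ) : ZMod s)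

lemma clB_eq : clB s t i = clA s t i + (t : ZMod s) := by
  simp only [clA, clB]; ring

lemma t_ne_zero (hs : 2 ≤ s) (hst : Nat.Coprime s t) : (t : ZMod s) ≠ 0 := by
  haveI : NeZero s := ⟨by omega⟩
  rw [Ne, ZMod.natCast_eq_zero_iff]
  intro hdvd
  have h1 : s ∣ Nat.gcd s t := Nat.dvd_gcd dvd_rfl hdvd
  rw [hst] at h1
  exact absurd (Nat.le_of_dvd one_pos h1) (by omega)

lemma clAB_ne (hs : 2 ≤ s) (hst : Nat.Coprime s t) : clA s t i ≠ clB s t i := by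
  rw [clB_eq]
  intro h
  exact t_ne_zero hs hst (by
    have := h.symm
    rwa [add_eq_left] at this)

lemma genActZ_eq_A {n : ℤ} (hn : (n : ZMod s) = clA s t i) :
    genActZ s t i n = n + t := by
  simp only [clA] at hn
  simp only [genActZ, if_pos hn]

lemma genActZ_eq_B (hAB : clA s t i ≠ clB s t i) {n : ℤ} (hn : (n : ZMod s) = clB s t i) :
    genActZ s t i n = n - t := by
  have h1 : ¬ ((n : ZMod s) = (i - 1) * (t : ZMod s) -
      ((((s : ℤ) - 1) * ((t : ℤ) - 1) / 2 : ℤ) : ZMod s)) := by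
    rw [hn]
    exact fun h => hAB (h.symm)
  simp only [clB] at hn
  simp only [genActZ, if_neg h1, if_pos hn]

lemma genActZ_eq_other {n : ℤ} (h1 : (n : ZMod s) ≠ clA s t i)
    (h2 : (n : ZMod s) ≠ clB s t i) : genActZ s t i n = n := by
  simp only [clA] at h1
  simp only [clB] at h2
  simp only [genActZ, if_neg h1, if_neg h2]

lemma cast_add_t (n : ℤ) : ((n + t : ℤ) : ZMod s) = (n : ZMod s) + (t : ZMod s) := by
  push_cast; ring

lemma cast_sub_t (n : ℤ) : ((n - t : ℤ) : ZMod s) = (n : ZMod s) - (t : ZMod s) := by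
  push_cast; ring

lemma genActZ_invol (hAB : clA s t i ≠ clB s t i) (n : ℤ) :
    genActZ s t i (genActZ s t i n) = n := by
  by_cases hA : (n : ZMod s) = clA s t i
  · rw [genActZ_eq_A hA, genActZ_eq_B hAB (by rw [cast_add_t, hA, clB_eq])]
    ring
  · by_cases hB : (n : ZMod s) = clB s t i
    · rw [genActZ_eq_B hAB hB, genActZ_eq_A (by rw [cast_sub_t, hB, clB_eq]; ring)]
      ring
    · rw [genActZ_eq_other hA hB, genActZ_eq_other hA hB]

lemma genActZ_mem_image (hAB : clA s t i ≠ clB s t i) {X : Set ℤ} {x : ℤ} :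
    x ∈ genActZ s t i '' X ↔ genActZ s t i x ∈ X := by
  constructor
  · rintro ⟨z, hz, rfl⟩
    rwa [genActZ_invol hAB]
  · intro h
    exact ⟨genActZ s t i x, h, genActZ_invol hAB x⟩

lemma genActZ_shift (hAB : clA s t i ≠ clB s t i) {a b : ℤ} (h : a ≡ b [ZMOD (s:ℤ)]) :
    genActZ s t i a - a = genActZ s t i b - b := by
  have hc : (a : ZMod s) = (b : ZMod s) := modeq_cast.mp h
  by_cases hA : (b : ZMod s) = clA s t i
  · rw [genActZ_eq_A hA, genActZ_eq_A (hc.trans hA)]; ring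
  · by_cases hB : (b : ZMod s) = clB s t i
    · rw [genActZ_eq_B hAB hB, genActZ_eq_B hAB (hc.trans hB)]; ring
    · rw [genActZ_eq_other hA hB,
        genActZ_eq_other (fun h' => hA (hc.symm.trans h'))
          (fun h' => hB (hc.symm.trans h'))]
      ring

lemma genActZ_le (hAB : clA s t i ≠ clB s t i) (n : ℤ) :
    genActZ s t i n ≤ n + t ∧ n - t ≤ genActZ s t i n := by
  have ht0 : (0:ℤ) ≤ (t:ℤ) := Int.natCast_nonneg t
  by_cases hA : (n : ZMod s) = clA s t i
  · rw [genActZ_eq_A hA]; omega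
  · by_cases hB : (n : ZMod s) = clB s t i
    · rw [genActZ_eq_B hAB hB]; omega
    · rw [genActZ_eq_other hA hB]; omega

end GA

end PfAux


namespace PfAux
open SeqPartition Set

lemma zsum_insert {S : Set ℤ} (h : S.Finite) {x : ℤ} (hx : x ∉ S) :
    zsum (insert x S) = x + zsum S := by
  rw [zsum_finite _ (h.insert x), zsum_finite _ h]
  have heq : (h.insert x).toFinset = insert x h.toFinset := by
    ext z; simp [Set.Finite.mem_toFinset]
  rw [heq, Finset.sum_insert (by simp [Set.Finite.mem_toFinset, hx])]

lemma zsum_map_sub (S : Set ℤ) (hS : S.Finite) (δ : ℤ) :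
    zsum ((fun z => z - δ) '' S) = zsum S - (S.ncard : ℤ) * δ := by
  have hfin2 : ((fun z => z - δ) '' S).Finite := hS.image _
  have himg : hfin2.toFinset = hS.toFinset.image (fun z => z - δ) := by
    ext z
    simp [Set.Finite.mem_toFinset]
  rw [zsum_finite _ hfin2, himg, Finset.sum_image (fun a _ b _ h => by omega),
    Finset.sum_sub_distrib, Finset.sum_const, zsum_finite _ hS, ncard_eq_card hS,
    nsmul_eq_mul]

section GAimage

variable {s t : ℕ} {i : ZMod s}

lemma beads_genActZ (hAB : clA s t i ≠ clB s t i) (X : Set ℤ) (x : ℤ) :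
    beads s (genActZ s t i '' X) x
      = (fun z => z - (genActZ s t i x - x)) '' beads s X (genActZ s t i x) := by
  ext y
  constructor
  · rintro ⟨hyB, hmod, hle⟩
    have hsh : genActZ s t i y - y = genActZ s t i x - x := genActZ_shift hAB hmod
    refine ⟨y + (genActZ s t i x - x), ⟨?_, ?_, ?_⟩, by simp only; ring⟩
    · rw [show y + (genActZ s t i x - x) = genActZ s t i y by omega]
      exact (genActZ_mem_image hAB).mp hyB
    · have h2 := hmod.add_right (genActZ s t i x - x)
      rwa [show x + (genActZ s t i x - x) = genActZ s t i x by ring] at h2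
    · omega
  · rintro ⟨z, ⟨hzX, hzmod, hzle⟩, rfl⟩
    have hmod : z - (genActZ s t i x - x) ≡ x [ZMOD (s:ℤ)] := by
      have h2 := hzmod.sub_right (genActZ s t i x - x)
      rwa [show genActZ s t i x - (genActZ s t i x - x) = x by ring] at h2
    have hsh : genActZ s t i (z - (genActZ s t i x - x)) - (z - (genActZ s t i x - x))
        = genActZ s t i x - x := genActZ_shift hAB hmod
    refine ⟨?_, hmod, by simp only; omega⟩
    show z - (genActZ s t i x - x) ∈ genActZ s t i '' X
    rw [genActZ_mem_image hAB,
      show genActZ s t i (z - (genActZ s t i x - x)) = z by omega]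
    exact hzX

lemma gaps_genActZ (hAB : clA s t i ≠ clB s t i) (X : Set ℤ) (x : ℤ) :
    gaps s (genActZ s t i '' X) x
      = (fun z => z - (genActZ s t i x - x)) '' gaps s X (genActZ s t i x) := by
  ext y
  constructor
  · rintro ⟨hyB, hmod, hlt⟩
    have hsh : genActZ s t i y - y = genActZ s t i x - x := genActZ_shift hAB hmod
    refine ⟨y + (genActZ s t i x - x), ⟨?_, ?_, ?_⟩, by simp only; ring⟩
    · intro hcon
      apply hyB
      apply (genActZ_mem_image hAB).mpr
      rwa [show genActZ s t i y = y + (genActZ s t i x - x) by omega]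
    · have h2 := hmod.add_right (genActZ s t i x - x)
      rwa [show x + (genActZ s t i x - x) = genActZ s t i x by ring] at h2
    · omega
  · rintro ⟨z, ⟨hzX, hzmod, hzlt⟩, rfl⟩
    have hmod : z - (genActZ s t i x - x) ≡ x [ZMOD (s:ℤ)] := by
      have h2 := hzmod.sub_right (genActZ s t i x - x)
      rwa [show genActZ s t i x - (genActZ s t i x - x) = x by ring] at h2
    have hsh : genActZ s t i (z - (genActZ s t i x - x)) - (z - (genActZ s t i x - x))
        = genActZ s t i x - x := genActZ_shift hAB hmod
    refine ⟨?_, hmod, by simp only; omega⟩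
    show z - (genActZ s t i x - x) ∉ genActZ s t i '' X
    intro hcon
    rw [genActZ_mem_image hAB,
      show genActZ s t i (z - (genActZ s t i x - x)) = z by omega] at hcon
    exact hzX hcon

lemma nu_genActZ (hAB : clA s t i ≠ clB s t i) (X : Set ℤ) (x : ℤ) :
    nu s (genActZ s t i '' X) x = nu s X (genActZ s t i x) := by
  have hinj : Function.Injective (fun z : ℤ => z - (genActZ s t i x - x)) :=
    fun a b h => by simp only at h; omega
  simp only [nu, beads_genActZ hAB, gaps_genActZ hAB,
    Set.ncard_image_of_injective _ hinj]

lemma coreBeta_genActZ (hAB : clA s t i ≠ clB s t i) (X : Set ℤ) :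
    coreBeta s (genActZ s t i '' X) = genActZ s t i '' coreBeta s X := by
  ext x
  rw [mem_coreBeta_iff, nu_genActZ hAB, genActZ_mem_image hAB, mem_coreBeta_iff]

lemma zsum_beads_genActZ (hAB : clA s t i ≠ clB s t i) {X : Set ℤ} {M : ℤ}
    (hM : ∀ x ∈ X, x ≤ M) (x : ℤ) :
    zsum (beads s (genActZ s t i '' X) x)
      = zsum (beads s X (genActZ s t i x))
        - ((beads s X (genActZ s t i x)).ncard : ℤ) * (genActZ s t i x - x) := by
  rw [beads_genActZ hAB, zsum_map_sub _ (beads_finite hM _)]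

end GAimage

section Tele

variable {s : ℕ} {B : Set ℤ} {N M : ℤ}

lemma zsum_beads_step (hs : 0 < s) (hM : ∀ x ∈ B, x ≤ M) {x : ℤ} (hx : x ∈ B) :
    zsum (beads s B x) = x + zsum (beads s B (x + s)) := by
  rw [beads_step_mem hs hx, zsum_insert (beads_finite hM _) (not_mem_beads_self_succ hs x)]

lemma beads_tele (hs : 0 < s) (hN : ∀ x : ℤ, x ≤ N → x ∈ B) (hM : ∀ x ∈ B, x ≤ M)
    (x : ℤ) (p : ℕ) (hlow : ∀ j : ℕ, j < p → x + (j:ℤ) * s ≤ N) :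
    zsum (beads s B (x + (p:ℤ) * s))
      = zsum (beads s B x) - ∑ j ∈ Finset.range p, (x + (j:ℤ) * s) := by
  revert hlow
  induction p with
  | zero => intro _; simp
  | succ p ih =>
    intro hlow
    have ih' := ih (fun j hj => hlow j (by omega))
    have hxp : x + (p:ℤ) * s ∈ B := hN _ (hlow p (by omega))
    have hstep := zsum_beads_step hs hM hxp
    rw [show x + ((p+1 : ℕ):ℤ) * s = (x + (p:ℤ) * s) + s by push_cast; ring,
      Finset.sum_range_succ]
    omega

end Tele

end PfAux


namespace PfAux
open SeqPartition Set

section Reps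

variable {s t : ℕ} {i : ZMod s}

lemma rep_exists (hs : 0 < s) (c : ZMod s) (x₀ : ℤ) :
    ∃ j : ℕ, j < s ∧ (((x₀ + (j:ℤ)) : ℤ) : ZMod s) = c := by
  haveI : NeZero s := ⟨by omega⟩
  have hs0 : (0:ℤ) < (s:ℤ) := by exact_mod_cast hs
  have hac : (((c.val : ℕ) : ℤ) : ZMod s) = c := by
    rw [Int.cast_natCast]
    exact ZMod.natCast_rightInverse c
  set a : ℤ := ((c.val : ℕ) : ℤ) with ha
  have hr0 : 0 ≤ (a - x₀) % s := Int.emod_nonneg _ (ne_of_gt hs0)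
  have hrs : (a - x₀) % s < s := Int.emod_lt_of_pos _ hs0
  refine ⟨((a - x₀) % s).toNat, by omega, ?_⟩
  have hcast : ((((a - x₀) % s).toNat : ℕ) : ℤ) = (a - x₀) % s := Int.toNat_of_nonneg hr0
  rw [hcast, ← hac]
  apply modeq_cast.mp
  refine Int.modEq_iff_dvd.mpr ⟨(a - x₀) / s, ?_⟩
  have hdef : (a - x₀) % s = (a - x₀) - s * ((a - x₀) / s) := by rw [Int.emod_def]
  linarith [hdef]

lemma rep_unique (hs : 0 < s) {x₀ : ℤ} {j j' : ℕ} (hj : j < s) (hj' : j' < s)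
    (h : (((x₀ + (j:ℤ)) : ℤ) : ZMod s) = (((x₀ + (j':ℤ)) : ℤ) : ZMod s)) : j = j' := by
  have hs0 : (0:ℤ) < (s:ℤ) := by exact_mod_cast hs
  have hmod := modeq_cast.mpr h
  obtain ⟨k, hk⟩ := hmod.dvd
  have hj2 : (j:ℤ) < s := by exact_mod_cast hj
  have hj2' : (j':ℤ) < s := by exact_mod_cast hj'
  have hjnn : (0:ℤ) ≤ (j:ℤ) := Int.natCast_nonneg j
  have hjnn' : (0:ℤ) ≤ (j':ℤ) := Int.natCast_nonneg j'
  have heq : (j:ℤ) = (j':ℤ) := by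
    rcases lt_trichotomy k 0 with hh | hh | hh
    · nlinarith
    · rw [hh, mul_zero] at hk; omega
    · nlinarith
  exact_mod_cast heq

end Reps

lemma sum_two_correction {n iu iv : ℕ} (hiu : iu < n) (hiv : iv < n) (hne : iu ≠ iv)
    (f g : ℕ → ℤ) (c : ℤ)
    (hother : ∀ j, j < n → j ≠ iu → j ≠ iv → f j = g j)
    (htwo : f iu + f iv = g iu + g iv + c) :
    ∑ j ∈ Finset.range n, f j = (∑ j ∈ Finset.range n, g j) + c := by
  have key : ∀ h : ℕ → ℤ, ∑ j ∈ Finset.range n, h j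
      = h iu + (h iv + ∑ j ∈ ((Finset.range n).erase iu).erase iv, h j) := by
    intro h
    have h1 : iu ∈ Finset.range n := Finset.mem_range.mpr hiu
    have h2 : iv ∈ (Finset.range n).erase iu :=
      Finset.mem_erase.mpr ⟨hne.symm, Finset.mem_range.mpr hiv⟩
    rw [← Finset.add_sum_erase _ h h1, ← Finset.add_sum_erase _ h h2]
  rw [key f, key g]
  have hsame : ∑ j ∈ ((Finset.range n).erase iu).erase iv, f j
      = ∑ j ∈ ((Finset.range n).erase iu).erase iv, g j := by
    apply Finset.sum_congr rfl
    intro j hj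
    simp only [Finset.mem_erase, Finset.mem_range] at hj
    exact hother j hj.2.2 hj.2.1 hj.1
  omega

section KeyCount

variable {s t : ℕ} {i : ZMod s}

lemma gen_count_sum (hs2 : 2 ≤ s) (ht : 0 < t) (hst : Nat.Coprime s t)
    {X : Set ℤ} {N M : ℤ} (hN : ∀ x : ℤ, x ≤ N → x ∈ X) (hM : ∀ x ∈ X, x ≤ M)
    {x₀ : ℤ} {iu iv p : ℕ}
    (hx₀ : x₀ ≤ N - t - s) (hiu : iu < s) (hiv : iv < s)
    (hiuc : ((x₀ + (iu:ℤ) : ℤ) : ZMod s) = clA s t i)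
    (hivc : ((x₀ + (iv:ℤ) : ℤ) : ZMod s) = clB s t i)
    (hup : x₀ + (iu:ℤ) + t = x₀ + (iv:ℤ) + (p:ℤ) * s) :
    ((genActZ s t i '' X ∩ Set.Ici x₀).ncard : ℤ) = ((X ∩ Set.Ici x₀).ncard : ℤ) ∧
    zsum (genActZ s t i '' X ∩ Set.Ici x₀) - zsum (X ∩ Set.Ici x₀)
      = (t:ℤ) * (nu s X (x₀ + (iu:ℤ)) - nu s X (x₀ + (iv:ℤ)) + p) := by
  have hs : 0 < s := by omega
  have hs0 : (0:ℤ) < (s:ℤ) := by exact_mod_cast hs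
  have ht0 : (0:ℤ) < (t:ℤ) := by exact_mod_cast ht
  have hAB := clAB_ne (i := i) hs2 hst
  have hiu' : (iu:ℤ) < s := by exact_mod_cast hiu
  have hiv' : (iv:ℤ) < s := by exact_mod_cast hiv
  have hiunn : (0:ℤ) ≤ (iu:ℤ) := Int.natCast_nonneg iu
  have hivnn : (0:ℤ) ≤ (iv:ℤ) := Int.natCast_nonneg iv
  have hune : iu ≠ iv := fun h => hAB (by rw [← hiuc, ← hivc, h])
  have hN' : ∀ x : ℤ, x ≤ N - t → x ∈ genActZ s t i '' X := by
    intro x hx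
    rw [genActZ_mem_image hAB]
    have h1 := (genActZ_le hAB x).1
    exact hN _ (by omega)
  have hM' : ∀ x ∈ genActZ s t i '' X, x ≤ M + t := by
    rintro x ⟨z, hz, rfl⟩
    have h1 := (genActZ_le hAB z).1
    have h2 := (genActZ_le hAB z).2
    have h3 := hM z hz
    omega
  obtain ⟨hcard1, hsum1⟩ := decomp hs hM' x₀
  obtain ⟨hcard2, hsum2⟩ := decomp hs hM x₀
  have hgu : genActZ s t i (x₀ + (iu:ℤ)) = x₀ + (iu:ℤ) + t := genActZ_eq_A hiuc
  have hgv : genActZ s t i (x₀ + (iv:ℤ)) = x₀ + (iv:ℤ) - t := genActZ_eq_B hAB hivc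
  have hgother : ∀ j : ℕ, j < s → j ≠ iu → j ≠ iv →
      genActZ s t i (x₀ + (j:ℤ)) = x₀ + (j:ℤ) := by
    intro j hj hju hjv
    apply genActZ_eq_other
    · intro hc; exact hju (rep_unique hs hj hiu (hc.trans hiuc.symm))
    · intro hc; exact hjv (rep_unique hs hj hiv (hc.trans hivc.symm))
  have hlowpt : ∀ j : ℕ, j < s → x₀ + (j:ℤ) ≤ N - t := by
    intro j hj
    have : (j:ℤ) < s := by exact_mod_cast hj
    omega
  have hnuut : nu s X (x₀ + (iu:ℤ) + t) = nu s X (x₀ + (iv:ℤ)) - p := by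
    rw [show x₀ + (iu:ℤ) + (t:ℤ) = x₀ + (iv:ℤ) + (p:ℤ)*s from hup]
    exact nu_add hs hN hM _ p
  have hvtp : (x₀ + (iv:ℤ) - t) + (p:ℤ) * s = x₀ + (iu:ℤ) := by linarith [hup]
  have hnvt : nu s X (x₀ + (iv:ℤ) - t) = nu s X (x₀ + (iu:ℤ)) + p := by
    have h2 := nu_add hs hN hM (x₀ + (iv:ℤ) - t) p
    rw [hvtp] at h2
    omega
  have hut_le : x₀ + (iu:ℤ) + t ≤ N := by omega
  have hvt_le : x₀ + (iv:ℤ) - t ≤ N := by omega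
  have hcondv : ∀ j : ℕ, j < p → x₀ + (iv:ℤ) + (j:ℤ) * s ≤ N := by
    intro j hj
    have hj1 : (j:ℤ) ≤ (p:ℤ) - 1 := by
      have : (j:ℤ) < (p:ℤ) := by exact_mod_cast hj
      omega
    have hprod : 0 ≤ ((p:ℤ) - 1 - (j:ℤ)) * s := mul_nonneg (by omega) hs0.le
    have hexp : ((p:ℤ)-1)*s - (j:ℤ)*s = ((p:ℤ)-1-(j:ℤ))*s := by ring
    have hpend : ((p:ℤ)-1)*s = (p:ℤ)*s - s := by ring
    linarith [hup]
  have hcondu : ∀ j : ℕ, j < p → (x₀ + (iv:ℤ) - t) + (j:ℤ) * s ≤ N := by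
    intro j hj
    have hj1 : (j:ℤ) ≤ (p:ℤ) - 1 := by
      have : (j:ℤ) < (p:ℤ) := by exact_mod_cast hj
      omega
    have hprod : 0 ≤ ((p:ℤ) - 1 - (j:ℤ)) * s := mul_nonneg (by omega) hs0.le
    have hexp : ((p:ℤ)-1)*s - (j:ℤ)*s = ((p:ℤ)-1-(j:ℤ))*s := by ring
    have hpend : ((p:ℤ)-1)*s = (p:ℤ)*s - s := by ring
    linarith [hup]
  have hsumv : zsum (beads s X (x₀ + (iu:ℤ) + t))
      = zsum (beads s X (x₀ + (iv:ℤ)))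
        - ∑ j ∈ Finset.range p, (x₀ + (iv:ℤ) + (j:ℤ)*s) := by
    have h1 := beads_tele hs hN hM (x₀ + (iv:ℤ)) p hcondv
    rwa [show x₀ + (iv:ℤ) + (p:ℤ)*s = x₀ + (iu:ℤ) + t by linarith [hup]] at h1
  have hsumu : zsum (beads s X (x₀ + (iv:ℤ) - t))
      = zsum (beads s X (x₀ + (iu:ℤ)))
        + ∑ j ∈ Finset.range p, (x₀ + (iv:ℤ) - t + (j:ℤ)*s) := by
    have h2 := beads_tele hs hN hM (x₀ + (iv:ℤ) - t) p hcondu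
    rw [hvtp] at h2
    linarith [h2]
  have hSig : (∑ j ∈ Finset.range p, (x₀ + (iv:ℤ) - t + (j:ℤ)*s))
      - (∑ j ∈ Finset.range p, (x₀ + (iv:ℤ) + (j:ℤ)*s)) = -(p:ℤ) * t := by
    calc (∑ j ∈ Finset.range p, (x₀ + (iv:ℤ) - t + (j:ℤ)*s))
          - (∑ j ∈ Finset.range p, (x₀ + (iv:ℤ) + (j:ℤ)*s))
        = ∑ _j ∈ Finset.range p, (-(t:ℤ)) := by
          rw [← Finset.sum_sub_distrib]
          exact Finset.sum_congr rfl (fun j _ => by ring)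
      _ = -(p:ℤ) * t := by
          rw [Finset.sum_const, Finset.card_range, nsmul_eq_mul]; ring
  constructor
  · rw [hcard1, hcard2]
    push_cast
    have hkey := sum_two_correction hiu hiv hune
      (fun j => ((beads s (genActZ s t i '' X) (x₀ + (j:ℤ))).ncard : ℤ))
      (fun j => ((beads s X (x₀ + (j:ℤ))).ncard : ℤ)) 0 ?_ ?_
    · linarith [hkey]
    · intro j hj hju hjv
      rw [← nu_low hN' (hlowpt j hj), nu_genActZ hAB, hgother j hj hju hjv,
        nu_low hN (by have := hlowpt j hj; omega)]
    · skip
      have e1 : ((beads s (genActZ s t i '' X) (x₀ + (iu:ℤ))).ncard : ℤ)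
          = nu s X (x₀ + (iu:ℤ) + t) := by
        rw [← nu_low hN' (hlowpt iu hiu), nu_genActZ hAB, hgu]
      have e2 : ((beads s (genActZ s t i '' X) (x₀ + (iv:ℤ))).ncard : ℤ)
          = nu s X (x₀ + (iv:ℤ) - t) := by
        rw [← nu_low hN' (hlowpt iv hiv), nu_genActZ hAB, hgv]
      have e3 : ((beads s X (x₀ + (iu:ℤ))).ncard : ℤ) = nu s X (x₀ + (iu:ℤ)) :=
        (nu_low hN (by omega)).symm
      have e4 : ((beads s X (x₀ + (iv:ℤ))).ncard : ℤ) = nu s X (x₀ + (iv:ℤ)) :=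
        (nu_low hN (by omega)).symm
      rw [e1, e2, e3, e4, hnuut, hnvt]
      ring
  · rw [hsum1, hsum2]
    have hkey := sum_two_correction hiu hiv hune
      (fun j => zsum (beads s (genActZ s t i '' X) (x₀ + (j:ℤ))))
      (fun j => zsum (beads s X (x₀ + (j:ℤ))))
      ((t:ℤ) * (nu s X (x₀ + (iu:ℤ)) - nu s X (x₀ + (iv:ℤ)) + p)) ?_ ?_
    · linarith [hkey]
    · intro j hj hju hjv
      rw [zsum_beads_genActZ hAB hM, hgother j hj hju hjv]
      simp
    · skip
      have e3 : ((beads s X (x₀ + (iu:ℤ) + t)).ncard : ℤ) = nu s X (x₀ + (iu:ℤ) + t) :=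
        (nu_low hN hut_le).symm
      have e4 : ((beads s X (x₀ + (iv:ℤ) - t)).ncard : ℤ) = nu s X (x₀ + (iv:ℤ) - t) :=
        (nu_low hN hvt_le).symm
      rw [zsum_beads_genActZ hAB hM, zsum_beads_genActZ hAB hM, hgu, hgv, e3, e4,
        hnuut, hnvt, hsumv, hsumu]
      have hfin : (nu s X (x₀ + (iv:ℤ)) - p) * (x₀ + (iu:ℤ) + t - (x₀ + (iu:ℤ)))
          = (nu s X (x₀ + (iv:ℤ)) - p) * t := by ring
      have hfin2 : (nu s X (x₀ + (iu:ℤ)) + p) * (x₀ + (iv:ℤ) - t - (x₀ + (iv:ℤ)))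
          = -((nu s X (x₀ + (iu:ℤ)) + p) * t) := by ring
      rw [hfin, hfin2]
      have hexp1 : (nu s X (x₀ + (iv:ℤ)) - p) * t
          = nu s X (x₀ + (iv:ℤ)) * t - (p:ℤ) * t := by ring
      have hexp2 : (nu s X (x₀ + (iu:ℤ)) + p) * t
          = nu s X (x₀ + (iu:ℤ)) * t + (p:ℤ) * t := by ring
      have hexp3 : (t:ℤ) * (nu s X (x₀ + (iu:ℤ)) - nu s X (x₀ + (iv:ℤ)) + p)
          = nu s X (x₀ + (iu:ℤ)) * t - nu s X (x₀ + (iv:ℤ)) * t + (p:ℤ) * t := by ring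
      linarith [hSig, hexp1, hexp2, hexp3]

end KeyCount

end PfAux


namespace PfAux
open SeqPartition Set

noncomputable def KK (x : ℤ) : ℤ := ∑ n ∈ Finset.range (-x).toNat, ((n:ℤ)+1)

lemma beta0_bdd (l : SeqPartition) : ∀ x ∈ beta 0 l, x ≤ el l 0 := by
  intro x hx
  rw [beta_eq_range] at hx
  obtain ⟨n, rfl⟩ := hx
  show el l n + 0 ≤ el l 0
  have := (el_strictAnti l).antitone (Nat.zero_le n)
  omega

lemma beta0_thr (l : SeqPartition) : ∃ N : ℤ, (∀ x : ℤ, x ≤ N → x ∈ beta 0 l) ∧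
    (∀ x : ℤ, x ≤ N → ((beta 0 l ∩ Ici x).ncard : ℤ) = -x) ∧
    (∀ x : ℤ, x ≤ N → (size l : ℤ) = zsum (beta 0 l ∩ Ici x) + KK x) := by
  obtain ⟨N₀, hN₀⟩ := l.eventually_zero
  have hel : ∀ n, N₀ ≤ n → el l n = -((n:ℤ)+1) := fun n hn => by simp [el, hN₀ n hn]
  refine ⟨-((N₀:ℤ)+1), ?_, ?_, ?_⟩
  · intro x hx
    rw [← range_el]
    refine ⟨(-x-1).toNat, ?_⟩
    rw [hel _ (by omega)]
    omega
  · intro x hx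
    have hM : N₀ + 1 ≤ (-x).toNat := by omega
    have := beta0_count l hel hM
    have hxeq : -(((-x).toNat : ℕ) : ℤ) = x := by omega
    rw [hxeq] at this
    omega
  · intro x hx
    have hM : N₀ + 1 ≤ (-x).toNat := by omega
    have := size_formula l hN₀ hM
    have hxeq : -(((-x).toNat : ℕ) : ℤ) = x := by omega
    rw [hxeq] at this
    rw [this, KK]

lemma coreBeta_count {s : ℕ} (hs : 0 < s) {B : Set ℤ} {N M : ℤ}
    (hN : ∀ x : ℤ, x ≤ N → x ∈ B) (hM : ∀ x ∈ B, x ≤ M) {x : ℤ} (hx : x ≤ N - s) :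
    ((coreBeta s B ∩ Ici x).ncard : ℤ) = ((B ∩ Ici x).ncard : ℤ) := by
  have hs0 : (0:ℤ) < (s:ℤ) := by exact_mod_cast hs
  have hCN : ∀ y : ℤ, y ≤ N → y ∈ coreBeta s B := fun y hy => coreBeta_low hN hM hy
  obtain ⟨hc1, -⟩ := decomp hs (fun y hy => coreBeta_bdd hM hy) x
  obtain ⟨hc2, -⟩ := decomp hs hM x
  rw [hc1, hc2]
  push_cast
  apply Finset.sum_congr rfl
  intro j hj
  have hj' : (j:ℤ) < s := by exact_mod_cast Finset.mem_range.mp hj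
  have hjle : x + (j:ℤ) ≤ N := by omega
  rw [← nu_low hCN hjle, nu_coreBeta_low hs hN hM hjle, nu_low hN hjle]

lemma coreBeta_count_le {s : ℕ} (hs : 0 < s) {B : Set ℤ} {N M : ℤ}
    (hN : ∀ x : ℤ, x ≤ N → x ∈ B) (hM : ∀ x ∈ B, x ≤ M) (x : ℤ) :
    (coreBeta s B ∩ Ici x).ncard ≤ (B ∩ Ici x).ncard := by
  obtain ⟨hc1, -⟩ := decomp hs (fun y hy => coreBeta_bdd hM hy) x
  obtain ⟨hc2, -⟩ := decomp hs hM x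
  rw [hc1, hc2]
  apply Finset.sum_le_sum
  intro j _
  have h1 := ncard_beads_coreBeta hs hN hM (x + (j:ℤ))
  have h2 : nu s B (x + (j:ℤ)) ≤ ((beads s B (x + (j:ℤ))).ncard : ℤ) := by
    simp only [nu]; omega
  have h3 : ((beads s (coreBeta s B) (x + (j:ℤ))).ncard : ℤ)
      ≤ ((beads s B (x + (j:ℤ))).ncard : ℤ) := by
    rw [h1]
    exact max_le h2 (Int.natCast_nonneg _)
  exact_mod_cast h3

lemma beta0_inter_finite (l : SeqPartition) (y : ℤ) : (beta 0 l ∩ Ici y).Finite :=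
  (Set.finite_Icc y (el l 0)).subset (fun x hx => ⟨hx.2, beta0_bdd l x hx.1⟩)

lemma f_le_of_counts {l l' : SeqPartition}
    (h : ∀ y : ℤ, (beta 0 l' ∩ Ici y).ncard ≤ (beta 0 l ∩ Ici y).ncard) :
    ∀ n, l'.f n ≤ l.f n := by
  intro n
  by_contra hcon
  push_neg at hcon
  have hel : el l n < el l' n := by
    simp only [el]; omega
  have h1 : n + 1 ≤ (beta 0 l' ∩ Ici (el l' n)).ncard := by
    have hsub : el l' '' Set.Iic n ⊆ beta 0 l' ∩ Ici (el l' n) := by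
      rintro z ⟨m, hm, rfl⟩
      exact ⟨by rw [← range_el]; exact ⟨m, rfl⟩, (el_strictAnti l').antitone hm⟩
    have himg : (el l' '' Set.Iic n).ncard = n + 1 := by
      rw [Set.ncard_image_of_injOn ((el_strictAnti l').injective.injOn),
        show (Set.Iic n) = ↑(Finset.Iic n) by ext k; simp, Set.ncard_coe_finset, Nat.card_Iic]
    rw [← himg]
    exact Set.ncard_le_ncard hsub (beta0_inter_finite l' _)
  have h2 : (beta 0 l ∩ Ici (el l' n)).ncard ≤ n := by
    have hsub : beta 0 l ∩ Ici (el l' n) ⊆ el l '' Set.Iio n := by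
      rintro z ⟨hz, hge⟩
      rw [← range_el] at hz
      obtain ⟨m, rfl⟩ := hz
      refine ⟨m, ?_, rfl⟩
      simp only [Set.mem_Iio]
      by_contra hm
      push_neg at hm
      have := (el_strictAnti l).antitone hm
      simp only [Set.mem_Ici] at hge
      omega
    calc (beta 0 l ∩ Ici (el l' n)).ncard ≤ (el l '' Set.Iio n).ncard :=
          Set.ncard_le_ncard hsub ((Set.finite_Iio n).image _)
      _ = n := by
          rw [Set.ncard_image_of_injOn ((el_strictAnti l).injective.injOn),
            show (Set.Iio n) = ↑(Finset.range n) by ext k; simp, Set.ncard_coe_finset,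
            Finset.card_range]
  have := h (el l' n)
  omega

lemma size_le_of_f_le {l l' : SeqPartition} (h : ∀ n, l'.f n ≤ l.f n) : size l' ≤ size l := by
  obtain ⟨N1, h1⟩ := l.eventually_zero
  obtain ⟨N2, h2⟩ := l'.eventually_zero
  have e1 : size l = ∑ n ∈ Finset.range (max N1 N2), l.f n := by
    rw [size]
    apply finsum_eq_sum_of_support_subset
    intro n hn
    simp only [Function.mem_support] at hn
    simp only [Finset.coe_range, Set.mem_Iio]
    by_contra hc
    exact hn (h1 n (by omega))
  have e2 : size l' = ∑ n ∈ Finset.range (max N1 N2), l'.f n := by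
    rw [size]
    apply finsum_eq_sum_of_support_subset
    intro n hn
    simp only [Function.mem_support] at hn
    simp only [Finset.coe_range, Set.mem_Iio]
    by_contra hc
    exact hn (h2 n (by omega))
  rw [e1, e2]
  exact Finset.sum_le_sum (fun n _ => h n)

lemma size_core_le' {s : ℕ} (hs : 0 < s) {m lc : SeqPartition} {N M : ℤ}
    (hN : ∀ x : ℤ, x ≤ N → x ∈ beta 0 m) (hM : ∀ x ∈ beta 0 m, x ≤ M)
    (hlc : beta 0 lc = coreBeta s (beta 0 m)) : size lc ≤ size m := by
  apply size_le_of_f_le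
  apply f_le_of_counts
  intro y
  rw [hlc]
  exact coreBeta_count_le hs hN hM y

lemma rep_setup {s t : ℕ} (i : ZMod s) (hs2 : 2 ≤ s) (ht : 0 < t) (x₀ : ℤ) :
    ∃ iu iv p : ℕ, iu < s ∧ iv < s ∧
      ((x₀ + (iu:ℤ) : ℤ) : ZMod s) = clA s t i ∧
      ((x₀ + (iv:ℤ) : ℤ) : ZMod s) = clB s t i ∧
      x₀ + (iu:ℤ) + t = x₀ + (iv:ℤ) + (p:ℤ) * s := by
  have hs : 0 < s := by omega
  have hs0 : (0:ℤ) < (s:ℤ) := by exact_mod_cast hs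
  have ht0 : (0:ℤ) < (t:ℤ) := by exact_mod_cast ht
  obtain ⟨iu, hiu, hiuc⟩ := rep_exists hs (clA s t i) x₀
  obtain ⟨iv, hiv, hivc⟩ := rep_exists hs (clB s t i) x₀
  have hmod : (x₀ + (iu:ℤ) + t) ≡ (x₀ + (iv:ℤ)) [ZMOD (s:ℤ)] := by
    apply modeq_cast.mpr
    have hiuc' := hiuc
    have hivc' := hivc
    push_cast at hiuc' hivc' ⊢
    rw [hiuc', hivc', clB_eq]
  obtain ⟨k, hk⟩ := hmod.dvd
  have hiv2 : (iv:ℤ) < s := by exact_mod_cast hiv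
  have hiu2 : (0:ℤ) ≤ (iu:ℤ) := Int.natCast_nonneg iu
  have hiv3 : (0:ℤ) ≤ (iv:ℤ) := Int.natCast_nonneg iv
  have hk0 : k ≤ 0 := by
    by_contra hcon
    push_neg at hcon
    have h1 : (s:ℤ) * 1 ≤ (s:ℤ) * k := mul_le_mul_of_nonneg_left (by omega) hs0.le
    rw [mul_one] at h1
    omega
  have hc : ((-k).toNat : ℤ) = -k := Int.toNat_of_nonneg (by omega)
  refine ⟨iu, iv, (-k).toNat, hiu, hiv, hiuc, hivc, ?_⟩
  rw [hc]
  linear_combination -hk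

lemma single_gen (s t : ℕ) (hs2 : 2 ≤ s) (ht : 0 < t) (hst : Nat.Coprime s t) (i : ZMod s)
    (l : SeqPartition) :
    wt s (genAct s t i l) = wt s l ∧ core s (genAct s t i l) = genAct s t i (core s l) := by
  have hs : 0 < s := by omega
  have hs0 : (0:ℤ) < (s:ℤ) := by exact_mod_cast hs
  have ht0 : (0:ℤ) < (t:ℤ) := by exact_mod_cast ht
  have hAB := clAB_ne (i := i) hs2 hst
  obtain ⟨N, hN, hcnt, hsize⟩ := beta0_thr l
  have hM : ∀ x ∈ beta 0 l, x ≤ el l 0 := beta0_bdd l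
  have hCN : ∀ x : ℤ, x ≤ N → x ∈ coreBeta s (beta 0 l) :=
    fun x hx => coreBeta_low hN hM hx
  have hCM : ∀ x ∈ coreBeta s (beta 0 l), x ≤ el l 0 := fun x hx => coreBeta_bdd hM hx
  obtain ⟨lc, hlc⟩ : ∃ lc, beta 0 lc = coreBeta s (beta 0 l) := by
    apply exists_beta0 (N := N - s) (M := el l 0) (fun x hx => hCN x (by omega)) hCM
    intro x hx
    rw [coreBeta_count hs hN hM (by omega : x ≤ N - s)]
    exact hcnt x (by omega)
  have hcore : core s l = lc := ofBeta_eq hlc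
  have hBN' : ∀ x : ℤ, x ≤ N - t → x ∈ genActZ s t i '' beta 0 l := by
    intro x hx
    rw [genActZ_mem_image hAB]
    have := (genActZ_le hAB x).1
    exact hN _ (by omega)
  have hBM' : ∀ x ∈ genActZ s t i '' beta 0 l, x ≤ el l 0 + t := by
    rintro x ⟨z, hz, rfl⟩
    have := (genActZ_le hAB z).1
    have := hM z hz
    omega
  obtain ⟨l1, hl1⟩ : ∃ l1, beta 0 l1 = genActZ s t i '' beta 0 l := by
    apply exists_beta0 (N := N - t - s) (M := el l 0 + t)
      (fun x hx => hBN' x (by omega)) hBM'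
    intro x hx
    obtain ⟨iu, iv, p, hiu, hiv, hiuc, hivc, hup⟩ := rep_setup i hs2 ht x
    have h1 := (gen_count_sum hs2 ht hst hN hM hx hiu hiv hiuc hivc hup).1
    rw [h1]
    exact hcnt x (by omega)
  have hga : genAct s t i l = l1 := ofBeta_eq hl1
  obtain ⟨l2, hl2⟩ : ∃ l2, beta 0 l2 = genActZ s t i '' coreBeta s (beta 0 l) := by
    apply exists_beta0 (N := N - t - s) (M := el l 0 + t) ?_ ?_ ?_
    · intro x hx
      rw [genActZ_mem_image hAB]
      have := (genActZ_le hAB x).1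
      exact hCN _ (by omega)
    · rintro x ⟨z, hz, rfl⟩
      have := (genActZ_le hAB z).1
      have := hCM z hz
      omega
    · intro x hx
      obtain ⟨iu, iv, p, hiu, hiv, hiuc, hivc, hup⟩ := rep_setup i hs2 ht x
      have h1 := (gen_count_sum hs2 ht hst hCN hCM hx hiu hiv hiuc hivc hup).1
      rw [h1, coreBeta_count hs hN hM (by omega : x ≤ N - s)]
      exact hcnt x (by omega)
  have hcoreB' : beta 0 (genAct s t i l) = genActZ s t i '' beta 0 l := by
    rw [hga, hl1]
  have hkey : core s (genAct s t i l) = l2 := by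
    have h1 : core s (genAct s t i l)
        = ofBeta (coreBeta s (genActZ s t i '' beta 0 l)) := by
      show ofBeta (coreBeta s (beta 0 (genAct s t i l))) = _
      rw [hcoreB']
    rw [h1, coreBeta_genActZ hAB]
    exact ofBeta_eq hl2
  have hkey2 : genAct s t i (core s l) = l2 := by
    show ofBeta (genActZ s t i '' beta 0 (core s l)) = l2
    rw [hcore, hlc]
    exact ofBeta_eq hl2
  refine ⟨?_, hkey.trans hkey2.symm⟩
  -- weight computation
  obtain ⟨N1, hN1, hcnt1, hsize1⟩ := beta0_thr l1
  obtain ⟨Nc, hNc, hcntc, hsizec⟩ := beta0_thr lc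
  obtain ⟨N2, hN2, hcnt2, hsize2⟩ := beta0_thr l2
  obtain ⟨x₀, hx1, hx2, hx3, hx4, hx5⟩ :
      ∃ x₀ : ℤ, x₀ ≤ N1 ∧ x₀ ≤ N2 ∧ x₀ ≤ Nc ∧ x₀ ≤ N ∧ x₀ ≤ N - t - s :=
    ⟨min N1 (min N2 (min Nc (N - t - s))), by omega, by omega, by omega, by omega, by omega⟩
  obtain ⟨iu, iv, p, hiu, hiv, hiuc, hivc, hup⟩ := rep_setup i hs2 ht x₀
  have hgB := (gen_count_sum hs2 ht hst hN hM hx5 hiu hiv hiuc hivc hup).2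
  have hgC := (gen_count_sum hs2 ht hst hCN hCM hx5 hiu hiv hiuc hivc hup).2
  have hiu' : (iu:ℤ) < s := by exact_mod_cast hiu
  have hiv' : (iv:ℤ) < s := by exact_mod_cast hiv
  have hnuu : nu s (coreBeta s (beta 0 l)) (x₀ + (iu:ℤ)) = nu s (beta 0 l) (x₀ + (iu:ℤ)) :=
    nu_coreBeta_low hs hN hM (by omega)
  have hnuv : nu s (coreBeta s (beta 0 l)) (x₀ + (iv:ℤ)) = nu s (beta 0 l) (x₀ + (iv:ℤ)) :=
    nu_coreBeta_low hs hN hM (by omega)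
  have hsl : (size l : ℤ) = zsum (beta 0 l ∩ Ici x₀) + KK x₀ := hsize x₀ hx4
  have hsl1 : (size l1 : ℤ) = zsum (genActZ s t i '' beta 0 l ∩ Ici x₀) + KK x₀ := by
    have := hsize1 x₀ hx1
    rwa [hl1] at this
  have hslc : (size lc : ℤ) = zsum (coreBeta s (beta 0 l) ∩ Ici x₀) + KK x₀ := by
    have := hsizec x₀ hx3
    rwa [hlc] at this
  have hsl2 : (size l2 : ℤ)
      = zsum (genActZ s t i '' coreBeta s (beta 0 l) ∩ Ici x₀) + KK x₀ := by
    have := hsize2 x₀ hx2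
    rwa [hl2] at this
  have hZ : (size l1 : ℤ) - (size l2 : ℤ) = (size l : ℤ) - (size lc : ℤ) := by
    rw [hsl, hsl1, hslc, hsl2]
    rw [hnuu, hnuv] at hgC
    linarith [hgB, hgC]
  have hle1 : size lc ≤ size l := size_core_le' hs hN hM hlc
  have hle2 : size l2 ≤ size l1 := by
    apply size_core_le' hs (N := N - t) (M := el l 0 + t)
      (fun x hx => by rw [hl1]; exact hBN' x hx)
      (fun x hx => by rw [hl1] at hx; exact hBM' x hx)
    rw [hl2, hl1, coreBeta_genActZ hAB]
  have hnat : size l1 - size l2 = size l - size lc := by omega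
  show (size (genAct s t i l) - size (core s (genAct s t i l))) / s
      = (size l - size (core s l)) / s
  rw [hkey, hga, hcore, hnat]

end PfAux


open SeqPartition in
/-- For `w ∈ W_s` acting at level `t`, `wλ` has the same `s`-weight as `λ`, and the
`s`-core of `wλ` is `w` applied to the `s`-core of `λ`. -/
theorem wt_core_wordAct (s t : ℕ) (hs : 2 ≤ s) (ht : 0 < t) (hst : Nat.Coprime s t)
    (l : SeqPartition) (w : List (ZMod s)) :
    wt s (wordAct s t w l) = wt s l ∧
    core s (wordAct s t w l) = wordAct s t w (core s l) := by
  induction w with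
  | nil => exact ⟨rfl, rfl⟩
  | cons j w ih =>
    have hsg := PfAux.single_gen s t hs ht hst j (wordAct s t w l)
    have hfold : wordAct s t (j :: w) l = genAct s t j (wordAct s t w l) := rfl
    have hfold2 : wordAct s t (j :: w) (core s l)
        = genAct s t j (wordAct s t w (core s l)) := rfl
    constructor
    · rw [hfold, hsg.1, ih.1]
    · rw [hfold, hsg.2, ih.2, hfold2]
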